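/- Let Ω be the set of vectors in {±1}^6 with evenly many −1 entries, and let G be the group of signed permutation matrices with evenly many −1 entries acting on Ω. If {a₁,a₂,a₃} and {b₁,b₂,b₃} are triples of distinct elements of Ω with d(aᵢ,aⱼ) = d(bᵢ,bⱼ) for all i,j, then there exists w ∈ G with w(aᵢ) = bᵢ for i = 1,2,3. -/

import Mathlib

/-- A 6×6 monomial matrix with entries in `{+1, −1, 0}` having an even number of
entries equal to `−1`. -/
def IsSignedPermEven (M : Matrix (Fin 6) (Fin 6) ℝ) : Prop :=
  ∃ (σ : Equiv.Perm (Fin 6)) (ε : Fin 6 → ℝ),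
    (∀ i, ε i = 1 ∨ ε i = -1) ∧
    Even (Finset.univ.filter (fun i => ε i = -1)).card ∧
    M = fun i j => if σ i = j then ε i else 0

/-- The set of vectors in `{±1}^6` containing an even number of entries equal to `−1`. -/
def OmegaD6 : Set (Fin 6 → ℝ) :=
  {v | (∀ i, v i = 1 ∨ v i = -1) ∧
    Even (Finset.univ.filter (fun i => v i = -1)).card}

/-- Splitting a filter count over two possible values. -/
lemma split_aux {α : Type*} [Fintype α] [DecidableEq α] (f : α → ℝ × ℝ) (u v : ℝ × ℝ)
    (huv : u ≠ v) (P : ℝ × ℝ → Prop) [DecidablePred P]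
    (hP : ∀ i, P (f i) ↔ f i = u ∨ f i = v) :
    (Finset.univ.filter fun i => P (f i)).card =
      (Finset.univ.filter fun i => f i = u).card +
        (Finset.univ.filter fun i => f i = v).card := by
  rw [← Finset.card_union_of_disjoint]
  · congr 1
    ext i
    simp only [Finset.mem_filter, Finset.mem_univ, true_and, Finset.mem_union, hP]
  · rw [Finset.disjoint_left]
    intro i hi hi'
    simp only [Finset.mem_filter, Finset.mem_univ, true_and] at hi hi'
    exact huv (hi ▸ hi' ▸ rfl)

/-- For a `±1` vector, evenness of the number of `-1` entries is equivalent to the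
product of the entries being `1`. -/
lemma even_iff_prod_eq_one (v : Fin 6 → ℝ) (hv : ∀ i, v i = 1 ∨ v i = -1) :
    Even (Finset.univ.filter (fun i => v i = -1)).card ↔ (∏ i, v i) = 1 := by
  have hprod : (∏ i, v i) = (-1 : ℝ) ^ (Finset.univ.filter (fun i => v i = -1)).card := by
    rw [← Finset.prod_filter_mul_prod_filter_not Finset.univ (fun i => v i = -1)]
    have h1 : (∏ i ∈ Finset.univ.filter (fun i => v i = -1), v i) =
        (-1 : ℝ) ^ (Finset.univ.filter (fun i => v i = -1)).card := by
      rw [Finset.prod_congr rfl (fun i hi => (Finset.mem_filter.mp hi).2), Finset.prod_const]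
    have h2 : (∏ i ∈ Finset.univ.filter (fun i => ¬ v i = -1), v i) = 1 :=
      Finset.prod_eq_one fun i hi => (hv i).resolve_right (Finset.mem_filter.mp hi).2
    rw [h1, h2, mul_one]
  rw [hprod, neg_one_pow_eq_one_iff_even]
  norm_num

theorem exists_signedPermEven_mapping_triples
    (a₁ a₂ a₃ b₁ b₂ b₃ : Fin 6 → ℝ)
    (ha₁ : a₁ ∈ OmegaD6) (ha₂ : a₂ ∈ OmegaD6) (ha₃ : a₃ ∈ OmegaD6)
    (hb₁ : b₁ ∈ OmegaD6) (hb₂ : b₂ ∈ OmegaD6) (hb₃ : b₃ ∈ OmegaD6)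
    (ha : a₁ ≠ a₂ ∧ a₁ ≠ a₃ ∧ a₂ ≠ a₃) (hb : b₁ ≠ b₂ ∧ b₁ ≠ b₃ ∧ b₂ ≠ b₃)
    (h12 : hammingDist a₁ a₂ = hammingDist b₁ b₂)
    (h13 : hammingDist a₁ a₃ = hammingDist b₁ b₃)
    (h23 : hammingDist a₂ a₃ = hammingDist b₂ b₃) :
    ∃ M : Matrix (Fin 6) (Fin 6) ℝ, IsSignedPermEven M ∧
      M.mulVec a₁ = b₁ ∧ M.mulVec a₂ = b₂ ∧ M.mulVec a₃ = b₃ := by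
  classical
  obtain ⟨ha₁s, ha₁e⟩ := ha₁
  obtain ⟨ha₂s, _⟩ := ha₂
  obtain ⟨ha₃s, _⟩ := ha₃
  obtain ⟨hb₁s, hb₁e⟩ := hb₁
  obtain ⟨hb₂s, _⟩ := hb₂
  obtain ⟨hb₃s, _⟩ := hb₃
  -- sign-pattern functions
  set g : Fin 6 → ℝ × ℝ := fun i => (a₁ i * a₂ i, a₁ i * a₃ i) with hg
  set f : Fin 6 → ℝ × ℝ := fun i => (b₁ i * b₂ i, b₁ i * b₃ i) with hf
  have hmulpm : ∀ x y : ℝ, (x = 1 ∨ x = -1) → (y = 1 ∨ y = -1) →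
      (x * y = 1 ∨ x * y = -1) := by
    rintro x y (rfl | rfl) (rfl | rfl) <;> norm_num
  have hg1 : ∀ i, (g i).1 = 1 ∨ (g i).1 = -1 := fun i => hmulpm _ _ (ha₁s i) (ha₂s i)
  have hg2 : ∀ i, (g i).2 = 1 ∨ (g i).2 = -1 := fun i => hmulpm _ _ (ha₁s i) (ha₃s i)
  have hf1 : ∀ i, (f i).1 = 1 ∨ (f i).1 = -1 := fun i => hmulpm _ _ (hb₁s i) (hb₂s i)
  have hf2 : ∀ i, (f i).2 = 1 ∨ (f i).2 = -1 := fun i => hmulpm _ _ (hb₁s i) (hb₃s i)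
  -- distances as counts on the sign patterns
  have hne_iff : ∀ x y : ℝ, (x = 1 ∨ x = -1) → (y = 1 ∨ y = -1) → (x ≠ y ↔ x * y = -1) := by
    rintro x y (rfl | rfl) (rfl | rfl) <;> norm_num
  have hd12 : hammingDist a₁ a₂ = (Finset.univ.filter fun i => (g i).1 = -1).card := by
    show (Finset.univ.filter fun i => a₁ i ≠ a₂ i).card = _
    congr 1
    exact Finset.filter_congr fun i _ => by
      simpa using hne_iff _ _ (ha₁s i) (ha₂s i)
  have hd13 : hammingDist a₁ a₃ = (Finset.univ.filter fun i => (g i).2 = -1).card := by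
    show (Finset.univ.filter fun i => a₁ i ≠ a₃ i).card = _
    congr 1
    exact Finset.filter_congr fun i _ => by
      simpa using hne_iff _ _ (ha₁s i) (ha₃s i)
  have hd12' : hammingDist b₁ b₂ = (Finset.univ.filter fun i => (f i).1 = -1).card := by
    show (Finset.univ.filter fun i => b₁ i ≠ b₂ i).card = _
    congr 1
    exact Finset.filter_congr fun i _ => by
      simpa using hne_iff _ _ (hb₁s i) (hb₂s i)
  have hd13' : hammingDist b₁ b₃ = (Finset.univ.filter fun i => (f i).2 = -1).card := by
    show (Finset.univ.filter fun i => b₁ i ≠ b₃ i).card = _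
    congr 1
    exact Finset.filter_congr fun i _ => by
      simpa using hne_iff _ _ (hb₁s i) (hb₃s i)
  have hcancel : ∀ x y z : ℝ, (x = 1 ∨ x = -1) → (y ≠ z ↔ x * y ≠ x * z) := by
    intro x y z hx
    have hx0 : x ≠ 0 := by rcases hx with rfl | rfl <;> norm_num
    constructor
    · exact fun h h' => h (mul_left_cancel₀ hx0 h')
    · exact fun h h' => h (by rw [h'])
  have hd23 : hammingDist a₂ a₃ = (Finset.univ.filter fun i => (g i).1 ≠ (g i).2).card := by
    show (Finset.univ.filter fun i => a₂ i ≠ a₃ i).card = _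
    congr 1
    exact Finset.filter_congr fun i _ => by
      exact hcancel (a₁ i) (a₂ i) (a₃ i) (ha₁s i)
  have hd23' : hammingDist b₂ b₃ = (Finset.univ.filter fun i => (f i).1 ≠ (f i).2).card := by
    show (Finset.univ.filter fun i => b₂ i ≠ b₃ i).card = _
    congr 1
    exact Finset.filter_congr fun i _ => by
      exact hcancel (b₁ i) (b₂ i) (b₃ i) (hb₁s i)
  -- fiber counts agree
  have key : ∀ h : Fin 6 → ℝ × ℝ, (∀ i, (h i).1 = 1 ∨ (h i).1 = -1) →
      (∀ i, (h i).2 = 1 ∨ (h i).2 = -1) →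
      (Finset.univ.filter fun i => (h i).1 = -1).card =
          (Finset.univ.filter fun i => h i = (-1, 1)).card +
            (Finset.univ.filter fun i => h i = (-1, -1)).card ∧
      (Finset.univ.filter fun i => (h i).2 = -1).card =
          (Finset.univ.filter fun i => h i = (1, -1)).card +
            (Finset.univ.filter fun i => h i = (-1, -1)).card ∧
      (Finset.univ.filter fun i => (h i).1 ≠ (h i).2).card =
          (Finset.univ.filter fun i => h i = (1, -1)).card +
            (Finset.univ.filter fun i => h i = (-1, 1)).card ∧
      (Finset.univ.filter fun i => h i = (1, 1)).card +
          (Finset.univ.filter fun i => h i = (1, -1)).card +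
          (Finset.univ.filter fun i => h i = (-1, 1)).card +
          (Finset.univ.filter fun i => h i = (-1, -1)).card = 6 := by
    intro h h1 h2
    have hiff : ∀ i, ∀ s t : ℝ, (s = 1 ∨ s = -1) → (t = 1 ∨ t = -1) →
        ((h i).1 = s ∧ (h i).2 = t ↔ h i = (s, t)) := by
      intro i s t _ _
      rw [Prod.ext_iff]
    have s1 := split_aux h (-1, 1) (-1, -1) (by norm_num [Prod.ext_iff])
      (fun x => x.1 = -1) (fun i => by
        rcases h1 i with h' | h' <;> rcases h2 i with h'' | h'' <;>
          simp [Prod.ext_iff, h', h''] <;> norm_num)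
    have s2 := split_aux h (1, -1) (-1, -1) (by norm_num [Prod.ext_iff])
      (fun x => x.2 = -1) (fun i => by
        rcases h1 i with h' | h' <;> rcases h2 i with h'' | h'' <;>
          simp [Prod.ext_iff, h', h''] <;> norm_num)
    have s3 := split_aux h (1, -1) (-1, 1) (by norm_num [Prod.ext_iff])
      (fun x => x.1 ≠ x.2) (fun i => by
        rcases h1 i with h' | h' <;> rcases h2 i with h'' | h'' <;>
          simp [Prod.ext_iff, h', h''] <;> norm_num)
    have s4 := split_aux h (1, 1) (1, -1) (by norm_num [Prod.ext_iff])
      (fun x => x.1 = 1) (fun i => by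
        rcases h1 i with h' | h' <;> rcases h2 i with h'' | h'' <;>
          simp [Prod.ext_iff, h', h''] <;> norm_num)
    have stot : (Finset.univ.filter fun i => (h i).1 = 1).card +
        (Finset.univ.filter fun i => (h i).1 = -1).card = 6 := by
      have hdisj : Disjoint (Finset.univ.filter fun i => (h i).1 = 1)
          (Finset.univ.filter fun i => (h i).1 = -1) := by
        rw [Finset.disjoint_left]
        intro i hi hi'
        simp only [Finset.mem_filter, Finset.mem_univ, true_and] at hi hi'
        rw [hi] at hi'
        norm_num at hi'
      have huniv : (Finset.univ.filter fun i => (h i).1 = 1) ∪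
          (Finset.univ.filter fun i => (h i).1 = -1) = Finset.univ := by
        ext i
        simp only [Finset.mem_union, Finset.mem_filter, Finset.mem_univ, true_and, iff_true]
        exact h1 i
      rw [← Finset.card_union_of_disjoint hdisj, huniv, Finset.card_univ, Fintype.card_fin]
    beta_reduce at s1 s2 s3 s4
    refine ⟨s1, s2, s3, ?_⟩
    omega
  obtain ⟨ga, gb, gc, gd⟩ := key g hg1 hg2
  obtain ⟨fa, fb, fc, fd⟩ := key f hf1 hf2
  have e12 : (Finset.univ.filter fun i => (g i).1 = -1).card =
      (Finset.univ.filter fun i => (f i).1 = -1).card := hd12.symm.trans (h12.trans hd12')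
  have e13 : (Finset.univ.filter fun i => (g i).2 = -1).card =
      (Finset.univ.filter fun i => (f i).2 = -1).card := hd13.symm.trans (h13.trans hd13')
  have e23 : (Finset.univ.filter fun i => (g i).1 ≠ (g i).2).card =
      (Finset.univ.filter fun i => (f i).1 ≠ (f i).2).card := hd23.symm.trans (h23.trans hd23')
  -- all fibers have equal cardinality
  have hfib : ∀ c : ℝ × ℝ, Fintype.card {i // f i = c} = Fintype.card {i // g i = c} := by
    intro c
    rw [Fintype.card_subtype, Fintype.card_subtype]
    by_cases hc1 : c = (1, 1)
    · subst hc1; omega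
    by_cases hc2 : c = (1, -1)
    · subst hc2; omega
    by_cases hc3 : c = (-1, 1)
    · subst hc3; omega
    by_cases hc4 : c = (-1, -1)
    · subst hc4; omega
    · have hempty : ∀ (h : Fin 6 → ℝ × ℝ), (∀ i, (h i).1 = 1 ∨ (h i).1 = -1) →
          (∀ i, (h i).2 = 1 ∨ (h i).2 = -1) →
          (Finset.univ.filter fun i => h i = c) = ∅ := by
        intro h h1 h2
        rw [Finset.filter_eq_empty_iff]
        intro i _ hic
        rcases h1 i with h' | h' <;> rcases h2 i with h'' | h''
        · exact hc1 (by rw [← hic, Prod.ext_iff]; exact ⟨h', h''⟩)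
        · exact hc2 (by rw [← hic, Prod.ext_iff]; exact ⟨h', h''⟩)
        · exact hc3 (by rw [← hic, Prod.ext_iff]; exact ⟨h', h''⟩)
        · exact hc4 (by rw [← hic, Prod.ext_iff]; exact ⟨h', h''⟩)
      rw [hempty f hf1 hf2, hempty g hg1 hg2]
  -- the permutation
  let e : ∀ c : ℝ × ℝ, {i // f i = c} ≃ {i // g i = c} :=
    fun c => Fintype.equivOfCardEq (hfib c)
  let σ : Equiv.Perm (Fin 6) := Equiv.ofFiberEquiv e
  have hσ : ∀ i, g (σ i) = f i := fun i => Equiv.ofFiberEquiv_map e i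
  -- the signs
  set ε : Fin 6 → ℝ := fun i => b₁ i * a₁ (σ i) with hε
  have hεpm : ∀ i, ε i = 1 ∨ ε i = -1 := fun i => hmulpm _ _ (hb₁s i) (ha₁s (σ i))
  have hsq : ∀ x : ℝ, (x = 1 ∨ x = -1) → x * x = 1 := by
    rintro x (rfl | rfl) <;> norm_num
  refine ⟨fun i j => if σ i = j then ε i else 0, ⟨σ, ε, hεpm, ?_, rfl⟩, ?_, ?_, ?_⟩
  · -- evenness
    rw [even_iff_prod_eq_one ε hεpm]
    have : (∏ i, ε i) = (∏ i, b₁ i) * ∏ i, a₁ (σ i) := by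
      rw [← Finset.prod_mul_distrib]
    rw [this, Equiv.prod_comp σ a₁,
      ← even_iff_prod_eq_one a₁ ha₁s |>.mp ha₁e, (even_iff_prod_eq_one b₁ hb₁s).mp hb₁e]
    rw [(even_iff_prod_eq_one a₁ ha₁s).mp ha₁e]
    norm_num
  all_goals {
    funext i
    have hmv : ∀ v : Fin 6 → ℝ,
        Matrix.mulVec (fun i j => if σ i = j then ε i else 0) v i = ε i * v (σ i) := by
      intro v
      simp [Matrix.mulVec, dotProduct, ite_mul]
    rw [hmv]
    have h1 := congrArg Prod.fst (hσ i)
    have h2 := congrArg Prod.snd (hσ i)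
    simp only [hg, hf] at h1 h2
    have hb1 := hsq _ (hb₁s i)
    have ha1 := hsq _ (ha₁s (σ i))
    show b₁ i * a₁ (σ i) * _ = _
    first
      | linear_combination b₁ i * ha1
      | linear_combination b₁ i * h1 + b₂ i * hb1
      | linear_combination b₁ i * h2 + b₃ i * hb1
  }
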